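/- Fix an integer m > 1. Let C(q) = ∑_{n≥0} c(n) q^n be the unique formal power series over ℤ satisfying (1−q)·C(q) = (1−q) + q·C(q^m). Then for every integer n ≥ 1, c(m·n) = c(m·(n−1) + 1). -/

import Mathlib

open PowerSeries

/-- Substitution of `q^m` for `q` in a formal power series: `F(q) ↦ F(q^m)`. -/
noncomputable def substPow (R : Type*) [Semiring R] (m : ℕ) (F : PowerSeries R) : PowerSeries R :=
  PowerSeries.mk fun n => if m ∣ n then PowerSeries.coeff (R := R) (n / m) F else 0

theorem noGap_shift (m : ℕ) (hm : 1 < m) (C : PowerSeries ℤ)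
    (hC : (1 - X) * C = (1 - X) + X * substPow ℤ m C) (c : ℕ → ℤ)
    (hc : ∀ n, c n = PowerSeries.coeff (R := ℤ) n C) (n : ℕ) (hn : 1 ≤ n) :
    c (m * n) = c (m * (n - 1) + 1) := by
  -- step lemma: for j ≥ 1 with ¬ m ∣ j, coeff (j+1) C = coeff j C
  have step : ∀ j : ℕ, 1 ≤ j → ¬ m ∣ j → PowerSeries.coeff (R := ℤ) (j+1) C = PowerSeries.coeff (R := ℤ) j C := by
    intro j hj hdvd
    have h := congrArg (PowerSeries.coeff (R := ℤ) (j+1)) hC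
    rw [sub_mul, one_mul, map_sub, map_add, map_sub, coeff_succ_X_mul,
        coeff_succ_X_mul, substPow, coeff_mk, if_neg hdvd,
        PowerSeries.coeff_one, if_neg (by omega : ¬ j + 1 = 0),
        PowerSeries.coeff_X, if_neg (by omega : ¬ j + 1 = 1)] at h
    linarith [h]
  have key : ∀ t : ℕ, t ≤ m - 1 →
      PowerSeries.coeff (R := ℤ) (m * (n-1) + 1 + t) C = PowerSeries.coeff (R := ℤ) (m * (n-1) + 1) C := by
    intro t
    induction t with
    | zero => intro _; rfl
    | succ t ih =>
      intro ht
      have h1 : ¬ m ∣ (m * (n-1) + 1 + t) := by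
        intro h
        have : m ∣ (1 + t) := (Nat.dvd_add_right (Dvd.intro _ rfl)).mp (by rwa [add_assoc] at h)
        have := Nat.le_of_dvd (by omega) this
        omega
      have := step (m * (n-1) + 1 + t) (by omega) h1
      rw [show m * (n-1) + 1 + (t+1) = (m * (n-1) + 1 + t) + 1 by ring, this, ih (by omega)]
  have hmn : m * n = m * (n-1) + 1 + (m - 1) := by
    have : n - 1 + 1 = n := Nat.succ_pred_eq_of_pos hn
    calc m * n = m * (n - 1 + 1) := by rw [this]
    _ = m * (n-1) + m := by ring
    _ = m * (n-1) + 1 + (m-1) := by omega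
  rw [hc, hc, hmn]
  exact key (m-1) le_rfl
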